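/- If Z is a zero forcing set of a digraph D and M is a matrix in S(D), then any vector x in the kernel of M whose support is disjoint from Z must be the zero vector. -/
import Mathlib


/-- The set of out-neighbors of `v` in the digraph with arc relation `A`. -/
def Nout {V : Type} (A : V → V → Prop) (v : V) : Set V := {w | A v w}

/-- The set of in-neighbors of `v`. -/
def Nin {V : Type} (A : V → V → Prop) (v : V) : Set V := {w | A w v}

/-- One application of the color change rule to the set `S` of filled vertices. -/
def Bstep {V : Type} (A : V → V → Prop) (S : Set V) : Set V :=
  S ∪ {w | ∃ v ∈ S, Nout A v \ S = {w}}

/-- `S` is a zero forcing set: iterating the color change rule fills all vertices. -/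
def IsZFS {V : Type} (A : V → V → Prop) (S : Set V) : Prop :=
  ∃ t, (Bstep A)^[t] S = Set.univ

/-- The failed zero forcing number: the maximum cardinality of a failed zero forcing set. -/
noncomputable def Fnum {V : Type} (A : V → V → Prop) : ℕ :=
  sSup {k | ∃ S : Set V, ¬ IsZFS A S ∧ S.ncard = k}

/-- The zero forcing number: the minimum cardinality of a zero forcing set. -/
noncomputable def Znum {V : Type} (A : V → V → Prop) : ℕ :=
  sInf {k | ∃ S : Set V, IsZFS A S ∧ S.ncard = k}

/-- `W` is a critical set: `W` is nonempty and no vertex outside `W` has exactly one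
out-neighbor in `W`. -/
def IsCritical {V : Type} (A : V → V → Prop) (W : Set V) : Prop :=
  W.Nonempty ∧ ∀ v ∈ Wᶜ, (Nout A v ∩ W).ncard ≠ 1

/-- `D` is a directed cycle: either a single vertex with no arcs, or the vertices can be
cyclically labeled so that the arcs are exactly the consecutive ones. -/
def IsDirectedCycle {V : Type} [Fintype V] (A : V → V → Prop) : Prop :=
  (Fintype.card V = 1 ∧ ∀ u v : V, ¬ A u v) ∨
  (2 ≤ Fintype.card V ∧ ∃ e : ZMod (Fintype.card V) ≃ V,
      ∀ i j : ZMod (Fintype.card V), A (e i) (e j) ↔ j = i + 1)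

theorem stmt_0 {V : Type} [Fintype V] [DecidableEq V]
    (A : V → V → Prop) (hA : Irreflexive A)
    (Z : Set V) (hZ : IsZFS A Z)
    (M : Matrix V V ℝ) (hM : ∀ i j : V, i ≠ j → (M i j ≠ 0 ↔ A i j))
    (x : V → ℝ) (hker : M.mulVec x = 0)
    (hsupp : ∀ i : V, x i ≠ 0 → i ∉ Z) :
    x = 0 := by
  obtain ⟨t, ht⟩ := hZ
  suffices h : ∀ t, ∀ i ∈ (Bstep A)^[t] Z, x i = 0 by
    funext i
    exact h t i (ht ▸ Set.mem_univ i)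
  intro t
  induction t with
  | zero =>
    intro i hi
    by_contra hx
    exact hsupp i hx hi
  | succ t ih =>
    rw [Function.iterate_succ_apply']
    rintro i (hi | ⟨v, hv, hNv⟩)
    · exact ih i hi
    · have hvz : M.mulVec x v = 0 := by rw [hker]; rfl
      have hsum : ∑ j, M v j * x j = 0 := hvz
      have heq : ∑ j, M v j * x j = M v i * x i := by
        apply Finset.sum_eq_single_of_mem i (Finset.mem_univ i)
        intro j _ hji
        by_cases hxj : x j = 0
        · simp [hxj]
        by_cases hMj : M v j = 0
        · simp [hMj]
        have hjv : j ≠ v := by intro h; exact hxj (by rw [h]; exact ih v hv)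
        have hAvj : A v j := (hM v j (Ne.symm hjv)).1 hMj
        have hjS : j ∉ (Bstep A)^[t] Z := fun h => hxj (ih j h)
        have hmem : j ∈ Nout A v \ (Bstep A)^[t] Z := ⟨hAvj, hjS⟩
        rw [hNv] at hmem
        exact absurd hmem hji
      have hiv : i ∈ Nout A v \ (Bstep A)^[t] Z := by rw [hNv]; rfl
      have hAvi : A v i := hiv.1
      have hne : v ≠ i := by rintro rfl; exact hA v hAvi
      have hMvi : M v i ≠ 0 := (hM v i hne).2 hAvi
      have : M v i * x i = 0 := heq ▸ hsum
      exact (mul_eq_zero.1 this).resolve_left hMvi
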